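/- Let v₂=(0,1,0), v₃=(0,0,1), v₅=(-1,-1,0), v₆=(1,2,1) in ℝ³. Then cone{v₂,v₃,v₅} ∪ cone{v₂,v₃,v₆} = cone{v₂,v₃,v₅,v₆}, and cone{v₂,v₃,v₅} ∩ cone{v₂,v₃,v₆} = cone{v₂,v₃}. (Inserting the 2-dimensional face ⟨v₂,v₃⟩ subdivides the quadrangular cone ⟨v₂,v₃,v₅,v₆⟩ of Σ into two simplicial cones.) -/

import Mathlib

def coneGen (S : Set (Fin 3 → ℝ)) : Set (Fin 3 → ℝ) :=
  {x | ∃ (n : ℕ) (c : Fin n → ℝ) (v : Fin n → (Fin 3 → ℝ)),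
      (∀ i, 0 ≤ c i) ∧ (∀ i, v i ∈ S) ∧ x = ∑ i, c i • v i}

def v1 : Fin 3 → ℝ := ![1, 0, 0]
def v2 : Fin 3 → ℝ := ![0, 1, 0]
def v3 : Fin 3 → ℝ := ![0, 0, 1]
def v4 : Fin 3 → ℝ := ![0, -1, -1]
def v5 : Fin 3 → ℝ := ![-1, -1, 0]
def v6 : Fin 3 → ℝ := ![1, 2, 1]

lemma coneGen_mono {S T : Set (Fin 3 → ℝ)} (h : S ⊆ T) : coneGen S ⊆ coneGen T := by
  rintro x ⟨n, c, v, h1, h2, h3⟩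
  exact ⟨n, c, v, h1, fun i => h (h2 i), h3⟩

lemma coneGen_halfspace {S : Set (Fin 3 → ℝ)} (a b c : ℝ)
    (h : ∀ v ∈ S, 0 ≤ a * v 0 + b * v 1 + c * v 2) :
    ∀ x ∈ coneGen S, 0 ≤ a * x 0 + b * x 1 + c * x 2 := by
  rintro x ⟨n, co, v, hco, hv, rfl⟩
  have hx : ∀ j, (∑ i, co i • v i) j = ∑ i, co i * v i j := by
    intro j; simp [Finset.sum_apply]
  rw [hx 0, hx 1, hx 2, Finset.mul_sum, Finset.mul_sum, Finset.mul_sum,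
    ← Finset.sum_add_distrib, ← Finset.sum_add_distrib]
  refine Finset.sum_nonneg fun i _ => ?_
  nlinarith [mul_nonneg (hco i) (h (v i) (hv i))]

lemma mem_coneGen_two {S : Set (Fin 3 → ℝ)} {a b : Fin 3 → ℝ}
    (ha : a ∈ S) (hb : b ∈ S) {p q : ℝ} (hp : 0 ≤ p) (hq : 0 ≤ q) :
    p • a + q • b ∈ coneGen S := by
  refine ⟨2, ![p, q], ![a, b], ?_, ?_, ?_⟩
  · intro i; fin_cases i <;> simpa
  · intro i; fin_cases i <;> simpa
  · simp [Fin.sum_univ_two]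

lemma mem_coneGen_three {S : Set (Fin 3 → ℝ)} {a b c : Fin 3 → ℝ}
    (ha : a ∈ S) (hb : b ∈ S) (hc : c ∈ S) {p q r : ℝ}
    (hp : 0 ≤ p) (hq : 0 ≤ q) (hr : 0 ≤ r) :
    p • a + q • b + r • c ∈ coneGen S := by
  refine ⟨3, ![p, q, r], ![a, b, c], ?_, ?_, ?_⟩
  · intro i; fin_cases i <;> simpa
  · intro i; fin_cases i <;> simpa
  · simp [Fin.sum_univ_three, add_assoc]

lemma mem_A {x : Fin 3 → ℝ} (h0 : x 0 ≤ 0) (h1 : x 0 ≤ x 1) (h2 : 0 ≤ x 2) :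
    x ∈ coneGen {v2, v3, v5} := by
  have hx : x = (x 1 - x 0) • v2 + x 2 • v3 + (-x 0) • v5 := by
    funext i; fin_cases i <;> simp [v2, v3, v5] <;> ring
  rw [hx]
  exact mem_coneGen_three (by simp) (by simp) (by simp)
    (by linarith) h2 (by linarith)

lemma mem_B {x : Fin 3 → ℝ} (h0 : 0 ≤ x 0) (h1 : 2 * x 0 ≤ x 1) (h2 : x 0 ≤ x 2) :
    x ∈ coneGen {v2, v3, v6} := by
  have hx : x = (x 1 - 2 * x 0) • v2 + (x 2 - x 0) • v3 + x 0 • v6 := by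
    funext i; fin_cases i <;> simp [v2, v3, v6] <;> ring
  rw [hx]
  exact mem_coneGen_three (by simp) (by simp) (by simp)
    (by linarith) (by linarith) h0

theorem stmt8 :
    coneGen {v2, v3, v5} ∪ coneGen {v2, v3, v6} = coneGen {v2, v3, v5, v6} ∧
    coneGen {v2, v3, v5} ∩ coneGen {v2, v3, v6} = coneGen {v2, v3} := by
  constructor
  · apply Set.Subset.antisymm
    · apply Set.union_subset
      · apply coneGen_mono; intro y hy; simp only [Set.mem_insert_iff, Set.mem_singleton_iff] at hy ⊢; tauto
      · apply coneGen_mono; intro y hy; simp only [Set.mem_insert_iff, Set.mem_singleton_iff] at hy ⊢; tauto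
    · intro x hx
      -- derive facet inequalities of the big cone
      have i1 : 0 ≤ 0 * x 0 + 0 * x 1 + 1 * x 2 :=
        coneGen_halfspace 0 0 1 (by rintro w (rfl|rfl|rfl|rfl) <;> norm_num [v2,v3,v5,v6, Matrix.cons_val_two, Matrix.vecHead, Matrix.vecTail]) x hx
      have i2 : 0 ≤ (-1) * x 0 + 0 * x 1 + 1 * x 2 :=
        coneGen_halfspace (-1) 0 1 (by rintro w (rfl|rfl|rfl|rfl) <;> norm_num [v2,v3,v5,v6, Matrix.cons_val_two, Matrix.vecHead, Matrix.vecTail]) x hx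
      have i3 : 0 ≤ (-1) * x 0 + 1 * x 1 + 0 * x 2 :=
        coneGen_halfspace (-1) 1 0 (by rintro w (rfl|rfl|rfl|rfl) <;> norm_num [v2,v3,v5,v6]) x hx
      have i4 : 0 ≤ (-2) * x 0 + 1 * x 1 + 0 * x 2 :=
        coneGen_halfspace (-2) 1 0 (by rintro w (rfl|rfl|rfl|rfl) <;> norm_num [v2,v3,v5,v6]) x hx
      rcases le_total (x 0) 0 with h | h
      · exact Or.inl (mem_A h (by linarith) (by linarith))
      · exact Or.inr (mem_B h (by linarith) (by linarith))
  · apply Set.Subset.antisymm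
    · rintro x ⟨hA, hB⟩
      have a1 : 0 ≤ (-1) * x 0 + 0 * x 1 + 0 * x 2 :=
        coneGen_halfspace (-1) 0 0 (by rintro w (rfl|rfl|rfl) <;> norm_num [v2,v3,v5]) x hA
      have a2 : 0 ≤ (-1) * x 0 + 1 * x 1 + 0 * x 2 :=
        coneGen_halfspace (-1) 1 0 (by rintro w (rfl|rfl|rfl) <;> norm_num [v2,v3,v5]) x hA
      have a3 : 0 ≤ 0 * x 0 + 0 * x 1 + 1 * x 2 :=
        coneGen_halfspace 0 0 1 (by rintro w (rfl|rfl|rfl) <;> norm_num [v2,v3,v5, Matrix.cons_val_two, Matrix.vecHead, Matrix.vecTail]) x hA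
      have b1 : 0 ≤ 1 * x 0 + 0 * x 1 + 0 * x 2 :=
        coneGen_halfspace 1 0 0 (by rintro w (rfl|rfl|rfl) <;> norm_num [v2,v3,v6]) x hB
      have h0 : x 0 = 0 := by linarith
      have hx : x = x 1 • v2 + x 2 • v3 := by
        funext i; fin_cases i <;> simp [v2, v3, h0]
      rw [hx]
      exact mem_coneGen_two (by simp) (by simp) (by linarith) (by linarith)
    · intro x hx
      constructor
      · exact coneGen_mono (by intro y hy; simp only [Set.mem_insert_iff, Set.mem_singleton_iff] at hy ⊢; tauto) hx
      · exact coneGen_mono (by intro y hy; simp only [Set.mem_insert_iff, Set.mem_singleton_iff] at hy ⊢; tauto) hx
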